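/- For every n ≥ 2, the subposet of F_{n+2} obtained by removing the chain C = {a_n, b_{n+1}} (i.e., the induced order on {a_0, …, a_{n−1}, a_{n+1}, b_0, …, b_n}) is realized by a family of n linear extensions, but is not realized by any family of n − 1 linear extensions. Hence, since F_{n+2} has dimension n + 2, the bound dim(P) ≤ dim(P ∖ C) + 2 for removing one chain is sharp. -/

import Mathlib

/-- `r` is a linear extension of `le`: a linear order on `P` extending `le`. -/
def IsLinExt {P : Type*} (le r : P → P → Prop) : Prop :=
  IsLinearOrder P r ∧ ∀ x y, le x y → r x y

/-- The family `L` of linear extensions of `le` realizes `le`. -/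
def RealizedBy {P ι : Type*} (le : P → P → Prop) (L : ι → P → P → Prop) : Prop :=
  (∀ i, IsLinExt le (L i)) ∧ ∀ x y, le x y ↔ ∀ i, L i x y

/-- The strict order of the standard example `F n`: `a i ≺ b j` iff `i ≠ j`,
where `a i = Sum.inl i` and `b j = Sum.inr j`. -/
def FnLt (n : ℕ) (u v : Fin n ⊕ Fin n) : Prop :=
  ∃ i j : Fin n, i ≠ j ∧ u = Sum.inl i ∧ v = Sum.inr j

/-- The partial order of the standard example `F n`. -/
def FnLe (n : ℕ) (u v : Fin n ⊕ Fin n) : Prop :=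
  u = v ∨ FnLt n u v

/-- The removed chain `C = {a_n, b_{n+1}}` inside `F (n+2)`. -/
def remChain (n : ℕ) : Set (Fin (n + 2) ⊕ Fin (n + 2)) :=
  {Sum.inl ⟨n, by omega⟩, Sum.inr ⟨n + 1, by omega⟩}

/-! ### Auxiliary machinery -/

/-- Rank function defining the `k`-th linear extension: the `a_i` (`i ≠ k`) come first
in ascending order, then `b_k`, then `a_k`, then the `b_j` (`j ≠ k`) in descending order. -/
def rnk (m k : ℕ) : Fin m ⊕ Fin m → ℕ
  | Sum.inl i => if i.1 = k then m + 1 else i.1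
  | Sum.inr j => if j.1 = k then m else m + 2 + (m - j.1)

lemma rnk_inj {m k : ℕ} {x y : Fin m ⊕ Fin m} (h : rnk m k x = rnk m k y) : x = y := by
  rcases x with i | i <;> rcases y with j | j <;>
    simp only [rnk] at h <;> split_ifs at h <;>
    first
      | (exact absurd h (by have := i.2; have := j.2; omega))
      | (congr 1; exact Fin.ext (by have := i.2; have := j.2; omega))

lemma rnk_mono {m k : ℕ} {x y : Fin m ⊕ Fin m} (h : FnLe m x y) :
    rnk m k x ≤ rnk m k y := by
  rcases h with rfl | ⟨i, j, hij, rfl, rfl⟩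
  · exact le_rfl
  · have hij' : i.1 ≠ j.1 := fun h => hij (Fin.ext h)
    have := i.2; have := j.2
    simp only [rnk]; split_ifs <;> omega

lemma linext_of_emb {P : Type*} {le : P → P → Prop} {f : P → ℕ}
    (hinj : ∀ x y, f x = f y → x = y) (hmono : ∀ x y, le x y → f x ≤ f y) :
    IsLinExt le (fun x y => f x ≤ f y) := by
  refine ⟨{ refl := fun a => le_refl _, trans := fun a b c h1 h2 => le_trans h1 h2,
            antisymm := fun a b h1 h2 => hinj a b (le_antisymm h1 h2),
            total := fun a b => le_total _ _ }, hmono⟩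

lemma card_le_of_realizer {P ι κ : Type*} [Fintype ι] [Fintype κ]
    {le : P → P → Prop} {L : ι → P → P → Prop} (hL : RealizedBy le L)
    (a b : κ → P)
    (hcrit : ∀ k, ¬ le (a k) (b k))
    (hcross : ∀ k l, k ≠ l → le (a k) (b l))
    (hbinj : ∀ k l, b k = b l → k = l) :
    Fintype.card κ ≤ Fintype.card ι := by
  have hex : ∀ k : κ, ∃ i, ¬ L i (a k) (b k) := by
    intro k
    by_contra h
    push_neg at h
    exact hcrit k ((hL.2 (a k) (b k)).2 h)
  choose f hf using hex
  refine Fintype.card_le_of_injective f ?_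
  intro k l hkl
  by_contra hne
  have hlin := (hL.1 (f k)).1
  have hext := (hL.1 (f k)).2
  have tot := hlin.total
  have h1 : L (f k) (b k) (a k) := (tot _ _).resolve_left (hf k)
  have h2 : L (f k) (b l) (a l) := by
    have := hf l; rw [← hkl] at this
    exact (tot _ _).resolve_left this
  have h3 : L (f k) (a k) (b l) := hext _ _ (hcross k l hne)
  have h4 : L (f k) (a l) (b k) := hext _ _ (hcross l k (Ne.symm hne))
  have htr := hlin.trans
  have hbkbl : L (f k) (b k) (b l) := htr _ _ _ h1 h3
  have hblbk : L (f k) (b l) (b k) := htr _ _ _ h2 h4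
  exact hne (hbinj k l (hlin.antisymm _ _ hbkbl hblbk))

lemma not_crit {m : ℕ} {i j : Fin m} (hij : i.1 = j.1) :
    ¬ FnLe m (Sum.inl i) (Sum.inr j) := by
  rintro (h | ⟨i', j', hij', h1, h2⟩)
  · exact Sum.inl_ne_inr h
  · rw [Sum.inl.injEq] at h1; rw [Sum.inr.injEq] at h2
    exact hij' (by rw [← h1, ← h2]; exact Fin.ext hij)

lemma cross_le {m : ℕ} {i j : Fin m} (hij : i.1 ≠ j.1) :
    FnLe m (Sum.inl i) (Sum.inr j) :=
  Or.inr ⟨i, j, fun h => hij (by rw [h]), rfl, rfl⟩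

lemma existsNe (v n : ℕ) (hn : 2 ≤ n) : ∃ t, t < n ∧ t ≠ v := by
  refine ⟨if v = 0 then 1 else 0, ?_, ?_⟩ <;> split_ifs <;> omega

lemma full_reversal {m : ℕ} (hm : 2 ≤ m) {x y : Fin m ⊕ Fin m} (h : ¬ FnLe m x y) :
    ∃ k : Fin m, rnk m k.1 y < rnk m k.1 x := by
  rcases x with i | i <;> rcases y with j | j
  · -- a_i vs a_j
    have hij : i.1 ≠ j.1 := by
      intro he; exact h (Or.inl (by rw [Fin.ext he]))
    refine ⟨i, ?_⟩
    have := j.2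
    simp only [rnk]; split_ifs <;> omega
  · -- a_i vs b_j : must have i = j
    have hij : i.1 = j.1 := by
      by_contra he; exact h (cross_le he)
    refine ⟨i, ?_⟩
    simp only [rnk]; split_ifs <;> omega
  · -- b_j vs a_i : reversed in any extension with k ≠ i
    obtain ⟨t, ht, hti⟩ := existsNe j.1 m hm
    refine ⟨⟨t, by omega⟩, ?_⟩
    have := i.2; have := j.2
    simp only [rnk]; split_ifs <;> omega
  · -- b_i vs b_j
    have hij : i.1 ≠ j.1 := by
      intro he; exact h (Or.inl (by rw [Fin.ext he]))
    refine ⟨j, ?_⟩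
    have := i.2; have := j.2
    simp only [rnk]; split_ifs <;> omega

lemma notmem_inl {n : ℕ} {i : Fin (n + 2)} (h : Sum.inl i ∉ remChain n) : i.1 ≠ n := by
  intro he
  exact h (Or.inl (by rw [Sum.inl.injEq]; exact Fin.ext he))

lemma notmem_inr {n : ℕ} {j : Fin (n + 2)} (h : Sum.inr j ∉ remChain n) : j.1 ≠ n + 1 := by
  intro he
  exact h (Or.inr (by rw [Set.mem_singleton_iff, Sum.inr.injEq]; exact Fin.ext he))

lemma sub_reversal {n : ℕ} (hn : 2 ≤ n) {x y : Fin (n + 2) ⊕ Fin (n + 2)}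
    (hx : x ∉ remChain n) (hy : y ∉ remChain n) (h : ¬ FnLe (n + 2) x y) :
    ∃ k : Fin n, rnk (n + 2) k.1 y < rnk (n + 2) k.1 x := by
  rcases x with i | i <;> rcases y with j | j
  · -- a_i vs a_j
    have hij : i.1 ≠ j.1 := by
      intro he; exact h (Or.inl (by rw [Fin.ext he]))
    have hi := notmem_inl hx; have hj := notmem_inl hy
    have h2i := i.2; have h2j := j.2
    by_cases hlt : i.1 < n
    · refine ⟨⟨i.1, hlt⟩, ?_⟩
      simp only [rnk]; split_ifs <;> omega
    · -- i = n+1, so j ≤ n-1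
      obtain ⟨t, ht, htj⟩ := existsNe j.1 n hn
      refine ⟨⟨t, ht⟩, ?_⟩
      simp only [rnk]; split_ifs <;> omega
  · -- a_i vs b_j : i = j ≤ n-1
    have hij : i.1 = j.1 := by
      by_contra he; exact h (cross_le he)
    have hi := notmem_inl hx; have hj := notmem_inr hy
    have h2j := j.2
    refine ⟨⟨i.1, by omega⟩, ?_⟩
    simp only [rnk]; split_ifs <;> omega
  · -- b_j vs a_i
    obtain ⟨t, ht, hti⟩ := existsNe j.1 n hn
    refine ⟨⟨t, ht⟩, ?_⟩
    have := i.2; have := j.2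
    simp only [rnk]; split_ifs <;> omega
  · -- b_i vs b_j
    have hij : i.1 ≠ j.1 := by
      intro he; exact h (Or.inl (by rw [Fin.ext he]))
    have hi := notmem_inr hx; have hj := notmem_inr hy
    have h2i := i.2; have h2j := j.2
    by_cases hlt : j.1 < n
    · refine ⟨⟨j.1, hlt⟩, ?_⟩
      simp only [rnk]; split_ifs <;> omega
    · -- j = n, i ≤ n-1
      obtain ⟨t, ht, hti⟩ := existsNe i.1 n hn
      refine ⟨⟨t, ht⟩, ?_⟩
      simp only [rnk]; split_ifs <;> omega

theorem stmt12 (n : ℕ) (hn : 2 ≤ n) :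
    (∃ L : Fin n → {x // x ∉ remChain n} → {x // x ∉ remChain n} → Prop,
      RealizedBy (fun x y : {x // x ∉ remChain n} => FnLe (n + 2) x.1 y.1) L) ∧
    (∀ L : Fin (n - 1) → {x // x ∉ remChain n} → {x // x ∉ remChain n} → Prop,
      ¬ RealizedBy (fun x y : {x // x ∉ remChain n} => FnLe (n + 2) x.1 y.1) L) ∧
    (∃ L : Fin (n + 2) → (Fin (n + 2) ⊕ Fin (n + 2)) → (Fin (n + 2) ⊕ Fin (n + 2)) → Prop,
      RealizedBy (FnLe (n + 2)) L) ∧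
    (∀ L : Fin (n + 1) → (Fin (n + 2) ⊕ Fin (n + 2)) → (Fin (n + 2) ⊕ Fin (n + 2)) → Prop,
      ¬ RealizedBy (FnLe (n + 2)) L) := by
  refine ⟨?_, ?_, ?_, ?_⟩
  · -- n extensions realize the subposet
    refine ⟨fun k x y => rnk (n + 2) k.1 x.1 ≤ rnk (n + 2) k.1 y.1, ?_, ?_⟩
    · intro k
      exact linext_of_emb (f := fun x : {x // x ∉ remChain n} => rnk (n + 2) k.1 x.1)
        (fun x y h => Subtype.ext (rnk_inj h)) (fun x y h => rnk_mono h)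
    · intro x y
      constructor
      · intro h k; exact rnk_mono h
      · intro hall
        by_contra hle
        obtain ⟨k, hk⟩ := sub_reversal hn x.2 y.2 hle
        exact absurd (hall k) (not_le.2 hk)
  · -- no n-1 extensions realize the subposet
    intro L hL
    have hsub : ∀ k : Fin n, (Sum.inl ⟨k.1, by omega⟩ : Fin (n + 2) ⊕ Fin (n + 2)) ∉ remChain n := by
      intro k hmem
      have := k.2
      rcases hmem with h | h
      · rw [Sum.inl.injEq, Fin.mk.injEq] at h; omega
      · exact Sum.inl_ne_inr h
    have hsub' : ∀ k : Fin n, (Sum.inr ⟨k.1, by omega⟩ : Fin (n + 2) ⊕ Fin (n + 2)) ∉ remChain n := by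
      intro k hmem
      have := k.2
      rcases hmem with h | h
      · exact Sum.inr_ne_inl h
      · rw [Set.mem_singleton_iff, Sum.inr.injEq, Fin.mk.injEq] at h; omega
    have hcard := card_le_of_realizer hL
      (fun k : Fin n => (⟨Sum.inl ⟨k.1, by omega⟩, hsub k⟩ : {x // x ∉ remChain n}))
      (fun k : Fin n => (⟨Sum.inr ⟨k.1, by omega⟩, hsub' k⟩ : {x // x ∉ remChain n}))
      (fun k => not_crit rfl)
      (fun k l hkl => cross_le (by simp only []; intro h; exact hkl (Fin.ext h)))
      (fun k l h => by
        have := congrArg Subtype.val h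
        simp only [Sum.inr.injEq, Fin.mk.injEq] at this
        exact Fin.ext this)
    simp only [Fintype.card_fin] at hcard
    omega
  · -- n+2 extensions realize F(n+2)
    refine ⟨fun k x y => rnk (n + 2) k.1 x ≤ rnk (n + 2) k.1 y, ?_, ?_⟩
    · intro k
      exact linext_of_emb (fun x y h => rnk_inj h) (fun x y h => rnk_mono h)
    · intro x y
      constructor
      · intro h k; exact rnk_mono h
      · intro hall
        by_contra hle
        obtain ⟨k, hk⟩ := full_reversal (by omega) hle
        exact absurd (hall k) (not_le.2 hk)
  · -- no n+1 extensions realize F(n+2)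
    intro L hL
    have hcard := card_le_of_realizer hL
      (fun k : Fin (n + 2) => Sum.inl k) (fun k : Fin (n + 2) => Sum.inr k)
      (fun k => not_crit rfl)
      (fun k l hkl => cross_le (fun h => hkl (Fin.ext h)))
      (fun k l h => by rwa [Sum.inr.injEq] at h)
    simp only [Fintype.card_fin] at hcard
    omega
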